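/- Suppose at some time t the weights of a deep linear network evolve as dW_l/dt = W_{L:l+1}ᵀ S⁻¹ r x*_{l−1}ᵀ and the scalar products x*_{l−1}ᵀ x̂_{l−1} are equal to a common constant c for all l = 1, …, L. Then the change in prediction satisfies dŷ/dt = ∑_{l=1}^{L} W_{L:l+1} W_{L:l+1}ᵀ S⁻¹ r c = c r, i.e., the change in prediction is exactly proportional to the output residual. -/

import Mathlib

open Matrix
private lemma vecMulVec_mulVec' {p q : ℕ} (a : Fin p → ℝ) (b : Fin q → ℝ) (u : Fin q → ℝ) :
    vecMulVec a b *ᵥ u = (b ⬝ᵥ u) • a := by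
  ext i
  simp only [Matrix.mulVec, dotProduct, Matrix.vecMulVec_apply, Pi.smul_apply,
    smul_eq_mul, Finset.sum_mul]
  exact Finset.sum_congr rfl fun j _ => by ring

private lemma sum_mulVec' {ι : Type*} {p q : ℕ} (s : Finset ι)
    (A : ι → Matrix (Fin p) (Fin q) ℝ) (v : Fin q → ℝ) :
    (∑ l ∈ s, A l) *ᵥ v = ∑ l ∈ s, A l *ᵥ v := by
  ext i
  simp only [Matrix.mulVec, dotProduct, Finset.sum_apply, Matrix.sum_apply, Finset.sum_mul]
  rw [Finset.sum_comm]

private lemma hasDerivAt_mulVec_entry {p q : ℕ}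
    {A : ℝ → Matrix (Fin p) (Fin q) ℝ} {A' : Matrix (Fin p) (Fin q) ℝ}
    {g : ℝ → Fin q → ℝ} {g' : Fin q → ℝ} {t₀ : ℝ}
    (hA : ∀ i j, HasDerivAt (fun t => A t i j) (A' i j) t₀)
    (hg : ∀ j, HasDerivAt (fun t => g t j) (g' j) t₀) (i : Fin p) :
    HasDerivAt (fun t => (A t *ᵥ g t) i) ((A' *ᵥ g t₀ + A t₀ *ᵥ g') i) t₀ := by
  have hfun : (fun t => (A t *ᵥ g t) i) = fun t => ∑ j, A t i j * g t j := by
    funext t; simp [Matrix.mulVec, dotProduct]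
  have hval : (A' *ᵥ g t₀ + A t₀ *ᵥ g') i
      = ∑ j, (A' i j * g t₀ j + A t₀ i j * g' j) := by
    simp [Matrix.mulVec, dotProduct, Finset.sum_add_distrib]
  rw [hfun, hval]
  exact HasDerivAt.fun_sum fun j _ => (hA i j).mul (hg j)

set_option maxHeartbeats 1000000 in

/-- Suppose at some time `t₀` the weights of a deep linear network
evolve as `dW_l/dt = W_{L:l+1}ᵀ S⁻¹ r x*_{l−1}ᵀ` and the scalar products
`x*_{l−1}ᵀ x̂_{l−1}` are all equal to a common constant `c` for `l = 1, …, L`.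
Then `dŷ/dt = ∑_{l=1}^L W_{L:l+1} W_{L:l+1}ᵀ S⁻¹ r c = c r`, i.e. the change in
prediction is exactly proportional to the output residual.
Here `P l t = W_{L:l+1}(t)`, `Q l t = W_{l:1}(t)`, and
`S = ∑_{k=1}^L W_{L:k+1} W_{L:k+1}ᵀ` (which is invertible). -/
theorem stmt8
    (L : ℕ) (hL : 1 ≤ L) (n : ℕ → ℕ)
    (W : ∀ k : ℕ, ℝ → Matrix (Fin (n k)) (Fin (n (k - 1))) ℝ)
    (P : ∀ k : ℕ, ℝ → Matrix (Fin (n L)) (Fin (n k)) ℝ)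
    (hPL : ∀ t : ℝ, P L t = 1)
    (hP : ∀ t : ℝ, ∀ k : ℕ, k < L → P k t = P (k + 1) t * W (k + 1) t)
    (Q : ∀ k : ℕ, ℝ → Matrix (Fin (n k)) (Fin (n 0)) ℝ)
    (hQ0 : ∀ t : ℝ, Q 0 t = 1)
    (hQ : ∀ t : ℝ, ∀ k : ℕ, 1 ≤ k → k ≤ L → Q k t = W k t * Q (k - 1) t)
    (x : Fin (n 0) → ℝ) (y : Fin (n L) → ℝ) (t₀ : ℝ)
    (xs : ∀ k : ℕ, Fin (n k) → ℝ) (c : ℝ)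
    (hS : IsUnit (∑ k ∈ Finset.Icc 1 L, P k t₀ * (P k t₀)ᵀ).det)
    (hW : ∀ l : ℕ, 1 ≤ l → l ≤ L → ∀ i j, HasDerivAt (fun t => W l t i j)
      (((P l t₀)ᵀ * ((∑ k ∈ Finset.Icc 1 L, P k t₀ * (P k t₀)ᵀ)⁻¹ *
        vecMulVec (y - P 0 t₀ *ᵥ x) (xs (l - 1)))) i j) t₀)
    (hc : ∀ l : ℕ, 1 ≤ l → l ≤ L → xs (l - 1) ⬝ᵥ (Q (l - 1) t₀ *ᵥ x) = c) :
    HasDerivAt (fun t => P 0 t *ᵥ x)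
      (∑ l ∈ Finset.Icc 1 L, c •
        ((P l t₀ * (P l t₀)ᵀ * (∑ k ∈ Finset.Icc 1 L, P k t₀ * (P k t₀)ᵀ)⁻¹) *ᵥ
          (y - P 0 t₀ *ᵥ x))) t₀ ∧
    ∑ l ∈ Finset.Icc 1 L, c •
        ((P l t₀ * (P l t₀)ᵀ * (∑ k ∈ Finset.Icc 1 L, P k t₀ * (P k t₀)ᵀ)⁻¹) *ᵥ
          (y - P 0 t₀ *ᵥ x)) =
      c • (y - P 0 t₀ *ᵥ x) := by
  set Sm : Matrix (Fin (n L)) (Fin (n L)) ℝ := ∑ k ∈ Finset.Icc 1 L, P k t₀ * (P k t₀)ᵀ with hSmdef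
  set r : Fin (n L) → ℝ := y - P 0 t₀ *ᵥ x with hrdef
  -- the derivative matrices of the weights
  have claim : ∀ d k, k + d = L →
      ∀ (g : ℝ → Fin (n k) → ℝ) (g' : Fin (n k) → ℝ),
        (∀ j, HasDerivAt (fun t => g t j) (g' j) t₀) → g t₀ = Q k t₀ *ᵥ x →
        ∀ i, HasDerivAt (fun t => (P k t *ᵥ g t) i)
          ((P k t₀ *ᵥ g' + ∑ l ∈ Finset.Icc (k+1) L,
            P l t₀ *ᵥ (((P l t₀)ᵀ * (Sm⁻¹ * vecMulVec r (xs (l - 1)))) *ᵥ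
              (Q (l - 1) t₀ *ᵥ x))) i) t₀ := by
    intro d
    induction d with
    | zero =>
      intro k hk g g' hg hg0 i
      have hkL : k = L := by omega
      subst hkL
      have hfun : (fun t => (P k t *ᵥ g t) i) = fun t => g t i := by
        funext t; rw [hPL, Matrix.one_mulVec]
      have hval : (P k t₀ *ᵥ g' + ∑ l ∈ Finset.Icc (k+1) k,
          P l t₀ *ᵥ (((P l t₀)ᵀ * (Sm⁻¹ * vecMulVec r (xs (l - 1)))) *ᵥ
            (Q (l - 1) t₀ *ᵥ x))) i = g' i := by
        rw [hPL, Matrix.one_mulVec, Finset.Icc_eq_empty (by omega), Finset.sum_empty, add_zero]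
      rw [hfun, hval]
      exact hg i
    | succ d ih =>
      intro k hk g g' hg hg0 i
      have hkL : k < L := by omega
      set h : ℝ → Fin (n (k+1)) → ℝ := fun t => W (k+1) t *ᵥ g t with hhdef
      set h' : Fin (n (k+1)) → ℝ :=
        ((P (k+1) t₀)ᵀ * (Sm⁻¹ * vecMulVec r (xs (k+1-1)))) *ᵥ (Q (k+1-1) t₀ *ᵥ x)
          + W (k+1) t₀ *ᵥ g' with hh'def
      have hh : ∀ j, HasDerivAt (fun t => h t j) (h' j) t₀ := by
        have := hasDerivAt_mulVec_entry (hW (k+1) (by omega) (by omega)) hg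
        rw [hg0] at this
        exact this
      have hh0 : h t₀ = Q (k+1) t₀ *ᵥ x := by
        have hq := hQ t₀ (k+1) (by omega) (by omega)
        rw [hhdef]
        simp only
        rw [hg0, Matrix.mulVec_mulVec]
        exact congrArg (fun M => M *ᵥ x) hq.symm
      have key := ih (k+1) (by omega) h h' hh hh0 i
      have hfun : (fun t => (P k t *ᵥ g t) i) = (fun t => (P (k+1) t *ᵥ h t) i) := by
        funext t; rw [hP t k hkL, ← Matrix.mulVec_mulVec]
      have hins : Finset.Icc (k+1) L = insert (k+1) (Finset.Icc (k+2) L) := by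
        ext m; simp only [Finset.mem_Icc, Finset.mem_insert]; omega
      have hval : (P k t₀ *ᵥ g' + ∑ l ∈ Finset.Icc (k+1) L,
          P l t₀ *ᵥ (((P l t₀)ᵀ * (Sm⁻¹ * vecMulVec r (xs (l - 1)))) *ᵥ
            (Q (l - 1) t₀ *ᵥ x)))
          = (P (k+1) t₀ *ᵥ h' + ∑ l ∈ Finset.Icc (k+1+1) L,
          P l t₀ *ᵥ (((P l t₀)ᵀ * (Sm⁻¹ * vecMulVec r (xs (l - 1)))) *ᵥ
            (Q (l - 1) t₀ *ᵥ x))) := by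
        have hnot : (k+1) ∉ Finset.Icc (k+2) L := by
          simp only [Finset.mem_Icc, not_and]; omega
        rw [hins, Finset.sum_insert hnot]
        rw [hh'def]
        rw [Matrix.mulVec_add, Matrix.mulVec_mulVec g' (P (k+1) t₀) (W (k+1) t₀),
          ← hP t₀ k hkL]
        abel
      rw [hfun, hval]
      exact key
  -- apply the claim at k = 0
  have claim0 := claim L 0 (by omega) (fun _ => x) 0
    (fun j => by simpa using hasDerivAt_const t₀ (x j))
    (by rw [hQ0, Matrix.one_mulVec])
  have hterm : ∀ l ∈ Finset.Icc 1 L,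
      P l t₀ *ᵥ (((P l t₀)ᵀ * (Sm⁻¹ * vecMulVec r (xs (l - 1)))) *ᵥ (Q (l - 1) t₀ *ᵥ x))
        = c • ((P l t₀ * (P l t₀)ᵀ * Sm⁻¹) *ᵥ r) := by
    intro l hl
    rw [Finset.mem_Icc] at hl
    rw [← Matrix.mulVec_mulVec, ← Matrix.mulVec_mulVec, vecMulVec_mulVec',
      hc l hl.1 hl.2, Matrix.mulVec_smul, Matrix.mulVec_smul, Matrix.mulVec_smul,
      Matrix.mulVec_mulVec, Matrix.mulVec_mulVec]
  have hsum2 : ∑ l ∈ Finset.Icc 1 L, c • ((P l t₀ * (P l t₀)ᵀ * Sm⁻¹) *ᵥ r) = c • r := by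
    rw [← Finset.smul_sum, ← sum_mulVec', ← Finset.sum_mul, ← hSmdef,
      Matrix.mul_nonsing_inv _ hS, Matrix.one_mulVec]
  refine ⟨?_, hsum2⟩
  rw [hasDerivAt_pi]
  intro i
  have hval : (P 0 t₀ *ᵥ (0 : Fin (n 0) → ℝ) + ∑ l ∈ Finset.Icc 1 L,
      P l t₀ *ᵥ (((P l t₀)ᵀ * (Sm⁻¹ * vecMulVec r (xs (l - 1)))) *ᵥ (Q (l - 1) t₀ *ᵥ x)))
      = ∑ l ∈ Finset.Icc 1 L, c • ((P l t₀ * (P l t₀)ᵀ * Sm⁻¹) *ᵥ r) := by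
    rw [Matrix.mulVec_zero, zero_add]
    exact Finset.sum_congr rfl hterm
  rw [← congrFun hval i]
  exact claim0 i
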